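/- Let A = (a_{ij}) ∈ ℝ^{n×n} be an irreducible symmetric Z-matrix with eigenvalues λ₁ ≤ λ₂ ≤ … ≤ λₙ such that λ₂ ≥ a_{ii} for every i ∈ {1, …, n}. Then λ₂·I − A is copositive and there exists an eigenvector v¹ ∈ ℝⁿ₊ of A corresponding to the eigenvalue λ₁. -/

import Mathlib

open scoped InnerProductSpace

/-- Multiplication of an `n × n` real matrix with a vector of `EuclideanSpace ℝ (Fin n)`. -/
noncomputable def mulVecE {n : ℕ} (A : Matrix (Fin n) (Fin n) ℝ)
    (x : EuclideanSpace ℝ (Fin n)) : EuclideanSpace ℝ (Fin n) :=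
  WithLp.toLp 2 (fun i => ∑ j, A i j * x j)

/-- A matrix `A` is reducible if for some permutation `σ` of the indices and some `m` with
`0 < m < n`, the permuted matrix `(i, j) ↦ A (σ i) (σ j)` has the block form
`[[B₁₁, B₁₂], [0, B₂₂]]` with `B₁₁` of size `m × m`; it is irreducible otherwise. -/
def Matrix.IsIrreducibleBlock {n : ℕ} (A : Matrix (Fin n) (Fin n) ℝ) : Prop :=
  ¬ ∃ (σ : Equiv.Perm (Fin n)) (m : ℕ), 0 < m ∧ m < n ∧
      ∀ i j : Fin n, m ≤ (i : ℕ) → (j : ℕ) < m → A (σ i) (σ j) = 0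

private lemma mulVecE_inner_eq {n : ℕ} (B : Matrix (Fin n) (Fin n) ℝ)
    (x : EuclideanSpace ℝ (Fin n)) :
    ⟪mulVecE B x, x⟫_ℝ = ∑ i, ∑ j, B i j * x j * x i := by
  simp [PiLp.inner_apply, RCLike.inner_apply, mulVecE, Finset.sum_mul]
  exact Finset.sum_congr rfl fun i _ => by
    rw [Finset.mul_sum]; exact Finset.sum_congr rfl fun j _ => by ring

private lemma mulVecE_sum_smul {n : ℕ} (A : Matrix (Fin n) (Fin n) ℝ)
    (c : Fin n → ℝ) (v : Fin n → EuclideanSpace ℝ (Fin n)) :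
    mulVecE A (∑ i, c i • v i) = ∑ i, c i • mulVecE A (v i) := by
  ext k
  have h1 : ∀ j, (∑ i, c i • v i) j = ∑ i, c i * v i j := fun j => by
    rw [WithLp.ofLp_sum, Finset.sum_apply j Finset.univ fun i => (c i • v i).ofLp]
    simp [PiLp.smul_apply]
  have h2 : (∑ i, c i • mulVecE A (v i)) k = ∑ i, c i * mulVecE A (v i) k := by
    rw [WithLp.ofLp_sum, Finset.sum_apply k Finset.univ fun i => (c i • mulVecE A (v i)).ofLp]
    simp [PiLp.smul_apply]
  show (∑ j, A k j * (∑ i, c i • v i) j) = _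
  rw [h2]
  simp only [h1, mulVecE, Finset.mul_sum]
  rw [Finset.sum_comm]
  exact Finset.sum_congr rfl fun i _ => Finset.sum_congr rfl fun j _ => by ring

/-- Let `A` be an irreducible symmetric Z-matrix (`n ≥ 2`) with an orthonormal basis of
eigenvectors and corresponding eigenvalues `μ₀ ≤ μ₁ ≤ … ≤ μₙ₋₁` such that `μ₁ ≥ Aᵢᵢ` for
every `i`.  Then `μ₁·I - A` is copositive and there exists a nonzero eigenvector `w ∈ ℝⁿ₊`
of `A` corresponding to the smallest eigenvalue `μ₀`. -/
theorem irreducible_Z_matrix_copositive_and_nonneg_eigenvector {n : ℕ} (hn : 2 ≤ n)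
    (A : Matrix (Fin n) (Fin n) ℝ) (hA : A.IsSymm)
    (hZ : ∀ i j : Fin n, i ≠ j → A i j ≤ 0) (hirr : A.IsIrreducibleBlock)
    (v : Fin n → EuclideanSpace ℝ (Fin n)) (hv : Orthonormal ℝ v)
    (μ : Fin n → ℝ) (heig : ∀ i, mulVecE A (v i) = μ i • v i) (hmono : Monotone μ)
    (hdiag : ∀ i : Fin n, A i i ≤ μ ⟨1, by omega⟩) :
    (∀ x : EuclideanSpace ℝ (Fin n), (∀ i, 0 ≤ x i) →
      0 ≤ ⟪mulVecE (μ ⟨1, by omega⟩ • (1 : Matrix (Fin n) (Fin n) ℝ) - A) x, x⟫_ℝ) ∧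
    ∃ w : EuclideanSpace ℝ (Fin n), w ≠ 0 ∧ (∀ i, 0 ≤ w i) ∧
      mulVecE A w = μ ⟨0, by omega⟩ • w := by
  constructor
  · intro x hx
    rw [mulVecE_inner_eq]
    refine Finset.sum_nonneg fun i _ => Finset.sum_nonneg fun j _ => ?_
    have hB : 0 ≤ (μ ⟨1, by omega⟩ • (1 : Matrix (Fin n) (Fin n) ℝ) - A) i j := by
      have hentry : (μ ⟨1, by omega⟩ • (1 : Matrix (Fin n) (Fin n) ℝ) - A) i j
          = μ ⟨1, by omega⟩ * (if i = j then 1 else 0) - A i j := by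
        simp [Matrix.sub_apply, Matrix.smul_apply, Matrix.one_apply, smul_eq_mul]
      rw [hentry]
      rcases eq_or_ne i j with h | h
      · subst h
        have := hdiag i
        rw [if_pos rfl, mul_one]
        linarith
      · have := hZ i j h
        rw [if_neg h, mul_zero]
        linarith
    exact mul_nonneg (mul_nonneg hB (hx j)) (hx i)
  · have hn0 : 0 < n := by omega
    haveI : Nonempty (Fin n) := ⟨⟨0, hn0⟩⟩
    set i0 : Fin n := ⟨0, hn0⟩ with hi0
    set w : EuclideanSpace ℝ (Fin n) := WithLp.toLp 2 (fun i => |v i0 i|) with hw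
    have hv0norm : ‖v i0‖ = 1 := hv.1 i0
    have hwne : w ≠ 0 := by
      intro h
      have hz : v i0 = 0 := by
        ext i
        have hi : |v i0 i| = 0 := congrArg (fun u : EuclideanSpace ℝ (Fin n) => u i) h
        exact abs_eq_zero.mp hi
      rw [hz] at hv0norm
      simp at hv0norm
    have hcard : Fintype.card (Fin n) = Module.finrank ℝ (EuclideanSpace ℝ (Fin n)) := by
      simp
    let b := basisOfLinearIndependentOfCardEqFinrank hv.linearIndependent hcard
    have hb : ⇑b = v := coe_basisOfLinearIndependentOfCardEqFinrank _ _
    set c : Fin n → ℝ := fun i => b.repr w i with hc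
    have hsum : ∑ i, c i • v i = w := by
      rw [hc, ← hb]
      exact b.sum_repr w
    have hAw : mulVecE A w = ∑ i, (μ i * c i) • v i := by
      rw [← hsum, mulVecE_sum_smul]
      refine Finset.sum_congr rfl fun i _ => ?_
      rw [heig i, smul_smul, mul_comm]
    have hinner_vw : ∀ i, ⟪v i, w⟫_ℝ = c i := by
      intro i
      rw [← hsum]
      exact hv.inner_right_fintype c i
    have hAww : ⟪mulVecE A w, w⟫_ℝ = ∑ i, μ i * c i * c i := by
      rw [hAw, sum_inner]
      refine Finset.sum_congr rfl fun i _ => ?_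
      rw [real_inner_smul_left, hinner_vw]
    have hww : ∑ i, c i * c i = 1 := by
      have h1 : ⟪w, w⟫_ℝ = ∑ i, c i * c i := by
        conv_lhs => rw [← hsum]
        rw [sum_inner]
        refine Finset.sum_congr rfl fun i _ => ?_
        rw [real_inner_smul_left, hv.inner_right_fintype c i]
      have h2 : ⟪w, w⟫_ℝ = ⟪v i0, v i0⟫_ℝ := by
        simp only [PiLp.inner_apply, RCLike.inner_apply, conj_trivial]
        refine Finset.sum_congr rfl fun i _ => ?_
        show |v i0 i| * |v i0 i| = v i0 i * v i0 i
        rw [← abs_mul, abs_mul_self]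
      rw [h2, real_inner_self_eq_norm_sq, hv0norm] at h1
      rw [← h1]
      norm_num
    have hineq : ⟪mulVecE A w, w⟫_ℝ ≤ μ i0 := by
      have hAvv : ⟪mulVecE A (v i0), v i0⟫_ℝ = μ i0 := by
        rw [heig, real_inner_smul_left, real_inner_self_eq_norm_sq, hv0norm]
        norm_num
      rw [← hAvv, mulVecE_inner_eq, mulVecE_inner_eq]
      refine Finset.sum_le_sum fun i _ => Finset.sum_le_sum fun j _ => ?_
      rcases eq_or_ne i j with h | h
      · subst h
        show A i i * |v i0 i| * |v i0 i| ≤ A i i * v i0 i * v i0 i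
        rw [mul_assoc, mul_assoc, ← abs_mul, abs_mul_self]
      · have hz := hZ i j h
        show A i j * |v i0 j| * |v i0 i| ≤ A i j * v i0 j * v i0 i
        have habs : v i0 j * v i0 i ≤ |v i0 j| * |v i0 i| := by
          calc v i0 j * v i0 i ≤ |v i0 j * v i0 i| := le_abs_self _
          _ = |v i0 j| * |v i0 i| := abs_mul _ _
        nlinarith
    have hterm : ∀ i, (μ i - μ i0) * (c i * c i) = 0 := by
      have hnn : ∀ i ∈ Finset.univ, 0 ≤ (μ i - μ i0) * (c i * c i) := by
        intro i _
        have hle : μ i0 ≤ μ i := hmono (Fin.mk_le_of_le_val (Nat.zero_le _))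
        have := mul_self_nonneg (c i)
        nlinarith
      have hle0 : ∑ i, (μ i - μ i0) * (c i * c i) ≤ 0 := by
        have heq : ∑ i, (μ i - μ i0) * (c i * c i)
            = (∑ i, μ i * c i * c i) - μ i0 * ∑ i, c i * c i := by
          rw [Finset.mul_sum, ← Finset.sum_sub_distrib]
          exact Finset.sum_congr rfl fun i _ => by ring
        rw [heq, hww, ← hAww]
        linarith
      have hz := (Finset.sum_eq_zero_iff_of_nonneg hnn).mp
        (le_antisymm hle0 (Finset.sum_nonneg hnn))
      exact fun i => hz i (Finset.mem_univ i)
    refine ⟨w, hwne, fun i => abs_nonneg _, ?_⟩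
    show mulVecE A w = μ i0 • w
    rw [hAw, ← hsum, Finset.smul_sum]
    refine Finset.sum_congr rfl fun i _ => ?_
    rw [smul_smul]
    congr 1
    rcases mul_eq_zero.mp (hterm i) with h | h
    · have : μ i = μ i0 := by linarith [sub_eq_zero.mp h]
      rw [this]
    · have : c i = 0 := by
        rcases mul_eq_zero.mp h with h' | h' <;> exact h'
      rw [this, mul_zero, mul_zero]
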